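/- arXiv:1209.5821 — 3 statements merged into one kernel-verified Lean document; each statement's English description precedes it below -/
import Mathlib

section
/- If A and B are positive semidefinite symmetric matrices with the same kernel, and A ⪯ B (i.e., xᵀAx ≤ xᵀBx for all x), then the Moore-Penrose pseudoinverses satisfy B⁺ ⪯ A⁺. -/
open Matrix

/-- `P` is a Moore-Penrose pseudoinverse of `A` (the four Penrose conditions). -/
def IsMoorePenrose {n : ℕ} (A P : Matrix (Fin n) (Fin n) ℝ) : Prop :=
  A * P * A = A ∧ P * A * P = P ∧ (A * P)ᵀ = A * P ∧ (P * A)ᵀ = P * A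

lemma mp_unique {n : ℕ} (A P Q : Matrix (Fin n) (Fin n) ℝ)
    (hP : IsMoorePenrose A P) (hQ : IsMoorePenrose A Q) : P = Q := by
  obtain ⟨hP1, hP2, hP3, hP4⟩ := hP
  obtain ⟨hQ1, hQ2, hQ3, hQ4⟩ := hQ
  have hAP : A * P = A * Q := by
    calc A * P = (A * Q * A) * P := by rw [hQ1]
    _ = (A * Q) * (A * P) := by rw [mul_assoc, mul_assoc]
    _ = (A * Q)ᵀ * (A * P)ᵀ := by rw [hQ3, hP3]
    _ = ((A * P) * (A * Q))ᵀ := by simp only [transpose_mul]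
    _ = ((A * P * A) * Q)ᵀ := by noncomm_ring
    _ = (A * Q)ᵀ := by rw [hP1]
    _ = A * Q := hQ3
  have hPA : P * A = Q * A := by
    calc P * A = P * (A * Q * A) := by rw [hQ1]
    _ = (P * A) * (Q * A) := by noncomm_ring
    _ = (P * A)ᵀ * (Q * A)ᵀ := by rw [hQ4, hP4]
    _ = ((Q * A) * (P * A))ᵀ := by simp only [transpose_mul]
    _ = ((Q * (A * P)) * A)ᵀ := by noncomm_ring
    _ = (Q * A)ᵀ := by rw [show Q * (A * P) * A = Q * (A * P * A) by noncomm_ring, hP1]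
    _ = Q * A := hQ4
  calc P = P * A * P := hP2.symm
  _ = Q * A * P := by rw [hPA]
  _ = Q * (A * P) := by rw [mul_assoc]
  _ = Q * (A * Q) := by rw [hAP]
  _ = Q * A * Q := by rw [mul_assoc]
  _ = Q := hQ2

lemma mp_symm {n : ℕ} (A P : Matrix (Fin n) (Fin n) ℝ)
    (hAs : Aᵀ = A) (hP : IsMoorePenrose A P) : Pᵀ = P := by
  obtain ⟨hP1, hP2, hP3, hP4⟩ := hP
  refine mp_unique A Pᵀ P ⟨?_, ?_, ?_, ?_⟩ ⟨hP1, hP2, hP3, hP4⟩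
  · calc A * Pᵀ * A = (Aᵀ * P * Aᵀ)ᵀ := by simp [transpose_mul, mul_assoc]
    _ = A := by rw [hAs, hP1, hAs]
  · calc Pᵀ * A * Pᵀ = (P * Aᵀ * P)ᵀ := by simp [transpose_mul, mul_assoc]
    _ = Pᵀ := by rw [hAs, hP2]
  · calc (A * Pᵀ)ᵀ = P * Aᵀ := by simp
    _ = P * A := by rw [hAs]
    _ = (P * A)ᵀ := hP4.symm
    _ = Aᵀ * Pᵀ := by simp
    _ = A * Pᵀ := by rw [hAs]
  · calc (Pᵀ * A)ᵀ = Aᵀ * P := by simp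
    _ = A * P := by rw [hAs]
    _ = (A * P)ᵀ := hP3.symm
    _ = Pᵀ * Aᵀ := by simp
    _ = Pᵀ * A := by rw [hAs]

/-- If `A` and `B` are PSD symmetric matrices with the same kernel and `A ⪯ B`,
then `B⁺ ⪯ A⁺`. -/
theorem stmt_0 {n : ℕ} (A B Ap Bp : Matrix (Fin n) (Fin n) ℝ)
    (hA : A.PosSemidef) (hB : B.PosSemidef)
    (hker : ∀ x : Fin n → ℝ, A.mulVec x = 0 ↔ B.mulVec x = 0)
    (hAB : ∀ x : Fin n → ℝ, x ⬝ᵥ A.mulVec x ≤ x ⬝ᵥ B.mulVec x)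
    (hAp : IsMoorePenrose A Ap) (hBp : IsMoorePenrose B Bp) :
    ∀ x : Fin n → ℝ, x ⬝ᵥ Bp.mulVec x ≤ x ⬝ᵥ Ap.mulVec x := by
  have hAs : Aᵀ = A := by have := hA.1; simpa using this.eq
  have hBs : Bᵀ = B := by have := hB.1; simpa using this.eq
  have hAps : Apᵀ = Ap := mp_symm A Ap hAs hAp
  have hBps : Bpᵀ = Bp := mp_symm B Bp hBs hBp
  obtain ⟨hA1, hA2, hA3, hA4⟩ := hAp
  obtain ⟨hB1, hB2, hB3, hB4⟩ := hBp
  -- commutation from symmetry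
  have hcommA : Ap * A = A * Ap := by
    calc Ap * A = (Ap * A)ᵀ := hA4.symm
    _ = Aᵀ * Apᵀ := by simp
    _ = A * Ap := by rw [hAs, hAps]
  have hcommB : Bp * B = B * Bp := by
    calc Bp * B = (Bp * B)ᵀ := hB4.symm
    _ = Bᵀ * Bpᵀ := by simp
    _ = B * Bp := by rw [hBs, hBps]
  -- B * (A * Ap) = B via the kernel hypothesis
  have hBAAp : B * (A * Ap) = B := by
    have hz : ∀ v, (B * (1 - Ap * A)).mulVec v = 0 := by
      intro v
      rw [← mulVec_mulVec, ← hker, mulVec_mulVec]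
      have h0 : A * (1 - Ap * A) = 0 := by
        rw [mul_sub, mul_one, ← mul_assoc, hA1, sub_self]
      rw [h0, zero_mulVec]
    have h0 : B * (1 - Ap * A) = 0 := by
      ext i j
      have := congrFun (hz (Pi.single j 1)) i
      simpa [mulVec_single] using this
    rw [mul_sub, mul_one] at h0
    rw [← hcommA]
    exact (sub_eq_zero.mp h0).symm
  have hAApB : A * Ap * B = B := by
    have ht : (A * Ap * B)ᵀ = B := by
      rw [transpose_mul, hA3, hBs, hBAAp]
    calc A * Ap * B = ((A * Ap * B)ᵀ)ᵀ := by rw [transpose_transpose]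
    _ = Bᵀ := by rw [ht]
    _ = B := hBs
  -- Bp = B * Bp * Bp
  have hBpfac : B * Bp * Bp = Bp := by
    calc B * Bp * Bp = (Bp * B) * Bp := by rw [hcommB]
    _ = Bp := hB2
  have key1 : A * Ap * Bp = Bp := by
    calc A * Ap * Bp = A * Ap * (B * Bp * Bp) := by rw [hBpfac]
    _ = (A * Ap * B) * Bp * Bp := by rw [← mul_assoc, ← mul_assoc]
    _ = B * Bp * Bp := by rw [hAApB]
    _ = Bp := hBpfac
  have key2 : Bp * A * Ap = Bp := by
    have := congrArg transpose key1
    rw [transpose_mul, transpose_mul, hAps, hAs, hBps, hcommA] at this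
    rw [mul_assoc]
    exact this
  have key3 : Ap * A * Bp = Bp := by
    rw [hcommA]; exact key1
  -- quadratic form machinery
  have dot_t : ∀ (N : Matrix (Fin n) (Fin n) ℝ) (x w : Fin n → ℝ),
      x ⬝ᵥ (Nᵀ.mulVec w) = (N.mulVec x) ⬝ᵥ w := by
    intro N x w
    rw [dotProduct_mulVec, vecMul_transpose]
  have quad : ∀ (N M : Matrix (Fin n) (Fin n) ℝ) (x : Fin n → ℝ),
      x ⬝ᵥ ((Nᵀ * M * N).mulVec x) = (N.mulVec x) ⬝ᵥ (M.mulVec (N.mulVec x)) := by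
    intro N M x
    rw [mul_assoc, ← mulVec_mulVec, dot_t, mulVec_mulVec]
  intro x
  -- positivity of the quadratic form at (Bp - Ap) x
  have hexp : (Bp - Ap)ᵀ * A * (Bp - Ap) = Bp * A * Bp - Bp - Bp + Ap := by
    have hCs : (Bp - Ap)ᵀ = Bp - Ap := by rw [transpose_sub, hAps, hBps]
    rw [hCs]
    have e : (Bp - Ap) * A * (Bp - Ap)
        = Bp * A * Bp - Bp * A * Ap - (Ap * A * Bp - Ap * A * Ap) := by
      noncomm_ring
    rw [e, key2, key3, hA2]
    noncomm_ring
  have hpos : 0 ≤ x ⬝ᵥ ((Bp * A * Bp - Bp - Bp + Ap).mulVec x) := by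
    rw [← hexp, quad]
    simpa using hA.dotProduct_mulVec_nonneg ((Bp - Ap).mulVec x)
  have hABq : x ⬝ᵥ ((Bp * A * Bp).mulVec x) ≤ x ⬝ᵥ (Bp.mulVec x) := by
    have qa := quad Bp A x
    have qb := quad Bp B x
    rw [hBps] at qa qb
    rw [hB2] at qb
    calc x ⬝ᵥ ((Bp * A * Bp).mulVec x) = (Bp.mulVec x) ⬝ᵥ (A.mulVec (Bp.mulVec x)) := qa
    _ ≤ (Bp.mulVec x) ⬝ᵥ (B.mulVec (Bp.mulVec x)) := hAB _
    _ = x ⬝ᵥ (Bp.mulVec x) := qb.symm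
  have hsplit : x ⬝ᵥ ((Bp * A * Bp - Bp - Bp + Ap).mulVec x)
      = x ⬝ᵥ ((Bp * A * Bp).mulVec x) - x ⬝ᵥ (Bp.mulVec x) - x ⬝ᵥ (Bp.mulVec x)
        + x ⬝ᵥ (Ap.mulVec x) := by
    simp [sub_mulVec, add_mulVec, dotProduct_sub, dotProduct_add]
  rw [hsplit] at hpos
  linarith
end

section
/- Let L be a connected graph Laplacian and L̃ a symmetric positive semidefinite matrix with the same kernel satisfying (1-δ)·L ⪯ L̃ ⪯ (1+δ)·L where δ = ε/8 and 0 < ε ≤ 1. Then the approximate effective resistance R̂(u,v) = ‖W^{1/2} B L̃⁺ (χ_u − χ_v)‖² satisfies (1-ε)·R(u,v) ≤ R̂(u,v) ≤ (1+ε)·R(u,v), where R(u,v) = (χ_u − χ_v)ᵀ L⁺ (χ_u − χ_v). -/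
open Matrix

private lemma aux_proj {n : ℕ} (A P : Matrix (Fin n) (Fin n) ℝ)
    (hA : Aᵀ = A) (h1 : A * P * A = A) (h2 : (A * P)ᵀ = A * P)
    (hker : ∀ x : Fin n → ℝ, A.mulVec x = 0 ↔ ∃ c : ℝ, ∀ k, x k = c)
    (χ : Fin n → ℝ) (hχ : ∑ k, χ k = 0) :
    A.mulVec (P.mulVec χ) = χ := by
  have hone : A.mulVec (fun _ => (1 : ℝ)) = 0 := (hker _).mpr ⟨1, fun _ => rfl⟩
  have hAAP : A * (A * P) = A := by
    have h := congrArg Matrix.transpose h1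
    rw [Matrix.transpose_mul, h2, hA] at h
    exact h
  have hAP1 : (A * P).mulVec (fun _ => (1 : ℝ)) = 0 := by
    rw [← h2, Matrix.transpose_mul, hA, ← Matrix.mulVec_mulVec, hone,
      Matrix.mulVec_zero]
  set z : Fin n → ℝ := χ - (A * P).mulVec χ with hzdef
  have hz0 : A.mulVec z = 0 := by
    rw [hzdef, Matrix.mulVec_sub, Matrix.mulVec_mulVec, hAAP, sub_self]
  obtain ⟨c, hc⟩ := (hker z).mp hz0
  have hsum : ∑ k, z k = 0 := by
    have h1' : ∑ k, ((A * P).mulVec χ) k = (fun _ => (1 : ℝ)) ⬝ᵥ (A * P).mulVec χ := by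
      simp [dotProduct]
    have h2' : (fun _ => (1 : ℝ)) ⬝ᵥ (A * P).mulVec χ = 0 := by
      rw [Matrix.dotProduct_mulVec, ← Matrix.mulVec_transpose, h2, hAP1,
        zero_dotProduct]
    simp only [hzdef, Pi.sub_apply, Finset.sum_sub_distrib, hχ, h1', h2', sub_zero]
  have hz : z = 0 := by
    funext k
    have hcard : (0 : ℝ) < (Fintype.card (Fin n) : ℝ) := by
      have : 0 < Fintype.card (Fin n) := Fintype.card_pos_iff.mpr ⟨k⟩
      exact_mod_cast this
    have : (Fintype.card (Fin n) : ℝ) * c = 0 := by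
      rw [← hsum]
      simp [hc, Finset.sum_const, mul_comm]
    have hc0 : c = 0 := by
      rcases mul_eq_zero.mp this with h | h
      · exact absurd h (ne_of_gt hcard)
      · exact h
    simp [hc k, hc0]
  have : (A * P).mulVec χ = χ := by
    have := sub_eq_zero.mp (hzdef ▸ hz)
    exact this.symm
  rw [Matrix.mulVec_mulVec, this]

private lemma quad_eq {m n : ℕ} (B : Matrix (Fin m) (Fin n) ℝ) (w : Fin m → ℝ)
    (z : Fin n → ℝ) :
    z ⬝ᵥ (Bᵀ * Matrix.diagonal w * B).mulVec z = ∑ e, w e * (B.mulVec z e) ^ 2 := by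
  have h0 : (Bᵀ * Matrix.diagonal w * B).mulVec z
      = Bᵀ.mulVec ((Matrix.diagonal w).mulVec (B.mulVec z)) := by
    rw [Matrix.mulVec_mulVec, Matrix.mulVec_mulVec, Matrix.mul_assoc]
  rw [h0, Matrix.dotProduct_mulVec, Matrix.vecMul_transpose]
  simp only [dotProduct, Matrix.mulVec_diagonal]
  exact Finset.sum_congr rfl fun e _ => by ring

set_option maxHeartbeats 1600000 in
/-- If `L̃` is symmetric PSD with the same kernel as the connected Laplacian
`L = BᵀWB` and `(1-δ)L ⪯ L̃ ⪯ (1+δ)L` with `δ = ε/8`, `0 < ε ≤ 1`, then the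
approximate effective resistances `R̂(u,v) = ‖W^{1/2} B L̃⁺ (χ_u - χ_v)‖²`
satisfy `(1-ε)·R(u,v) ≤ R̂(u,v) ≤ (1+ε)·R(u,v)`. -/
theorem stmt_6 {m n : ℕ} (B : Matrix (Fin m) (Fin n) ℝ) (w : Fin m → ℝ)
    (hw : ∀ e, 0 < w e)
    (hB : ∀ e : Fin m, ∃ i j : Fin n, i ≠ j ∧
      (fun k => B e k) = (Pi.single i 1 - Pi.single j 1 : Fin n → ℝ))
    (L Lp Lt Ltp : Matrix (Fin n) (Fin n) ℝ) (ε δ : ℝ)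
    (hε0 : 0 < ε) (hε1 : ε ≤ 1) (hδ : δ = ε / 8)
    (hL : L = Bᵀ * Matrix.diagonal w * B)
    (hconn : ∀ x : Fin n → ℝ, L.mulVec x = 0 ↔ ∃ c : ℝ, ∀ k, x k = c)
    (hLt : Lt.PosSemidef)
    (hker : ∀ x : Fin n → ℝ, Lt.mulVec x = 0 ↔ L.mulVec x = 0)
    (h₁ : ∀ x : Fin n → ℝ, (1 - δ) * (x ⬝ᵥ L.mulVec x) ≤ x ⬝ᵥ Lt.mulVec x)
    (h₂ : ∀ x : Fin n → ℝ, x ⬝ᵥ Lt.mulVec x ≤ (1 + δ) * (x ⬝ᵥ L.mulVec x))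
    (hLp : IsMoorePenrose L Lp) (hLtp : IsMoorePenrose Lt Ltp) :
    ∀ u v : Fin n,
      (1 - ε) * ((Pi.single u 1 - Pi.single v 1) ⬝ᵥ Lp.mulVec (Pi.single u 1 - Pi.single v 1)) ≤
        (∑ e : Fin m,
          ((Matrix.diagonal (fun e => Real.sqrt (w e)) * B * Ltp).mulVec
            (Pi.single u 1 - Pi.single v 1) e) ^ 2) ∧
      (∑ e : Fin m,
          ((Matrix.diagonal (fun e => Real.sqrt (w e)) * B * Ltp).mulVec
            (Pi.single u 1 - Pi.single v 1) e) ^ 2) ≤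
        (1 + ε) * ((Pi.single u 1 - Pi.single v 1) ⬝ᵥ Lp.mulVec (Pi.single u 1 - Pi.single v 1)) := by
  intro u v
  set χ : Fin n → ℝ := Pi.single u 1 - Pi.single v 1 with hχdef
  have hχsum : ∑ k, χ k = 0 := by
    simp [hχdef, Finset.sum_sub_distrib]
  have hLsym : Lᵀ = L := by
    rw [hL]
    simp [Matrix.transpose_mul, Matrix.mul_assoc]
  have hLtsym : Ltᵀ = Lt := by
    have := hLt.1
    simpa [Matrix.IsHermitian] using this
  -- quadratic form of L
  have hq : ∀ z : Fin n → ℝ, z ⬝ᵥ L.mulVec z = ∑ e, w e * (B.mulVec z e) ^ 2 :=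
    fun z => by rw [hL]; exact quad_eq B w z
  have hqnn : ∀ z : Fin n → ℝ, 0 ≤ z ⬝ᵥ L.mulVec z := fun z => by
    rw [hq]
    exact Finset.sum_nonneg fun e _ => mul_nonneg (hw e).le (sq_nonneg _)
  have hqtnn : ∀ z : Fin n → ℝ, 0 ≤ z ⬝ᵥ Lt.mulVec z := fun z => by
    have := hLt.dotProduct_mulVec_nonneg z
    simpa using this
  -- the effective resistance representatives
  have hx : L.mulVec (Lp.mulVec χ) = χ :=
    aux_proj L Lp hLsym hLp.1 hLp.2.2.1 hconn χ hχsum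
  have hy : Lt.mulVec (Ltp.mulVec χ) = χ :=
    aux_proj Lt Ltp hLtsym hLtp.1 hLtp.2.2.1
      (fun z => (hker z).trans (hconn z)) χ hχsum
  set x : Fin n → ℝ := Lp.mulVec χ with hxdef
  set y : Fin n → ℝ := Ltp.mulVec χ with hydef
  set R : ℝ := χ ⬝ᵥ x with hRdef
  have hqx : x ⬝ᵥ L.mulVec x = R := by rw [hx, dotProduct_comm]
  have hR0 : 0 ≤ R := by rw [← hqx]; exact hqnn x
  have hxχ : x ⬝ᵥ χ = R := dotProduct_comm x χ
  -- key inequality for L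
  have K : ∀ z : Fin n → ℝ, 2 * (z ⬝ᵥ χ) ≤ z ⬝ᵥ L.mulVec z + R := by
    intro z
    have h := hqnn (z - x)
    have e1 : z ⬝ᵥ L.mulVec x = z ⬝ᵥ χ := by rw [hx]
    have e2 : x ⬝ᵥ L.mulVec z = z ⬝ᵥ χ := by
      rw [Matrix.dotProduct_mulVec, ← Matrix.mulVec_transpose, hLsym, hx,
        dotProduct_comm]
    have expand : (z - x) ⬝ᵥ L.mulVec (z - x)
        = z ⬝ᵥ L.mulVec z - 2 * (z ⬝ᵥ χ) + R := by
      rw [Matrix.mulVec_sub, sub_dotProduct, dotProduct_sub,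
        dotProduct_sub, e1, e2, hqx]
      ring
    rw [expand] at h
    linarith
  set s : ℝ := y ⬝ᵥ χ with hsdef
  have hyLty : y ⬝ᵥ Lt.mulVec y = s := by rw [hy]
  -- key inequality for Lt
  have KT : ∀ z : Fin n → ℝ, 2 * (z ⬝ᵥ χ) ≤ z ⬝ᵥ Lt.mulVec z + s := by
    intro z
    have h := hqtnn (z - y)
    have e1 : z ⬝ᵥ Lt.mulVec y = z ⬝ᵥ χ := by rw [hy]
    have e2 : y ⬝ᵥ Lt.mulVec z = z ⬝ᵥ χ := by
      rw [Matrix.dotProduct_mulVec, ← Matrix.mulVec_transpose, hLtsym, hy,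
        dotProduct_comm]
    have expand : (z - y) ⬝ᵥ Lt.mulVec (z - y)
        = z ⬝ᵥ Lt.mulVec z - 2 * (z ⬝ᵥ χ) + s := by
      rw [Matrix.mulVec_sub, sub_dotProduct, dotProduct_sub,
        dotProduct_sub, e1, e2, hyLty]
      ring
    rw [expand] at h
    linarith
  set qy : ℝ := y ⬝ᵥ L.mulVec y with hqydef
  have hqy0 : 0 ≤ qy := hqnn y
  have hδ1 : (0 : ℝ) < 1 - δ := by rw [hδ]; linarith
  have hδ2 : (0 : ℝ) < 1 + δ := by rw [hδ]; linarith
  -- quadratic form under scaling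
  have hsmul : ∀ (c : ℝ) (z : Fin n → ℝ),
      (c • z) ⬝ᵥ L.mulVec (c • z) = c ^ 2 * (z ⬝ᵥ L.mulVec z) := by
    intro c z
    rw [Matrix.mulVec_smul, smul_dotProduct, dotProduct_smul]
    simp [smul_eq_mul]; ring
  have hsmulχ : ∀ (c : ℝ) (z : Fin n → ℝ), (c • z) ⬝ᵥ χ = c * (z ⬝ᵥ χ) := by
    intro c z
    rw [smul_dotProduct]; simp [smul_eq_mul]
  -- rewrite the approximate resistance as qy
  have hRhat : (∑ e : Fin m,
      ((Matrix.diagonal (fun e => Real.sqrt (w e)) * B * Ltp).mulVec χ e) ^ 2) = qy := by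
    rw [hqydef, hq]
    refine Finset.sum_congr rfl fun e _ => ?_
    have h1 : (Matrix.diagonal (fun e => Real.sqrt (w e)) * B * Ltp).mulVec χ
        = (Matrix.diagonal (fun e => Real.sqrt (w e))).mulVec (B.mulVec y) := by
      rw [Matrix.mul_assoc, ← Matrix.mulVec_mulVec, ← Matrix.mulVec_mulVec, hydef]
    rw [h1, Matrix.mulVec_diagonal]
    rw [mul_pow, Real.sq_sqrt (hw e).le]
  -- Upper bound chain
  have A1 : (1 - δ) * qy ≤ s := by
    have := h₁ y
    rw [hyLty] at this
    exact this
  have A2 : 2 * ((1 - δ) * s) ≤ (1 - δ) ^ 2 * qy + R := by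
    have := K ((1 - δ) • y)
    rw [hsmul, hsmulχ] at this
    exact this
  have h3 : (1 - δ) * s ≤ R := by
    nlinarith [mul_le_mul_of_nonneg_left A1 hδ1.le]
  have h4 : (1 - δ) ^ 2 * qy ≤ R := by
    nlinarith [mul_le_mul_of_nonneg_left A1 hδ1.le]
  have hupper : qy ≤ (1 + ε) * R := by
    rw [hδ] at h4
    nlinarith [mul_nonneg hqy0 hε0.le, mul_nonneg (mul_nonneg hqy0 hε0.le) hε0.le,
      mul_le_mul_of_nonneg_left h4 (by linarith : (0:ℝ) ≤ 1 + ε)]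
  -- Lower bound chain
  have B1 : s ≤ (1 + δ) * qy := by
    have := h₂ y
    rw [hyLty] at this
    exact this
  set c : ℝ := (1 + δ)⁻¹ with hcdef
  have hcc : (1 + δ) * c = 1 := mul_inv_cancel₀ (ne_of_gt hδ2)
  have hc0 : 0 < c := inv_pos.mpr hδ2
  have B2 : c * R ≤ s := by
    have hKT := KT (c • x)
    rw [hsmulχ, hxχ] at hKT
    have hh2 := h₂ (c • x)
    rw [hsmul, hqx] at hh2
    -- 2 c R ≤ (1+δ) c² R + s  and (1+δ)c = 1 so (1+δ)c² = c
    have hc2 : (1 + δ) * (c ^ 2 * R) = c * R := by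
      have : (1 + δ) * c ^ 2 = c := by
        rw [sq, ← mul_assoc, hcc, one_mul]
      rw [← mul_assoc, this]
    nlinarith
  have hlower : (1 - ε) * R ≤ qy := by
    -- R ≤ (1+δ)² qy
    have h5 : R ≤ (1 + δ) ^ 2 * qy := by
      have hmul := mul_le_mul_of_nonneg_left B1 hδ2.le
      -- (1+δ) s ≤ (1+δ)² qy; and (1+δ)(cR) ≤ (1+δ) s, (1+δ)c = 1
      have h6 : R ≤ (1 + δ) * s := by
        have := mul_le_mul_of_nonneg_left B2 hδ2.le
        rw [← mul_assoc, hcc, one_mul] at this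
        exact this
      nlinarith
    rw [hδ] at h5
    nlinarith [mul_nonneg hqy0 hε0.le, mul_nonneg hR0 hε0.le,
      mul_nonneg (mul_nonneg hR0 hε0.le) hε0.le, sq_nonneg ε]
  rw [hRhat]
  exact ⟨hlower, hupper⟩
end

section
/- The sum over all edges e = (i,j) of w_e times the effective resistance R^G(i,j) equals n − 1, for any connected weighted graph G on n vertices. -/
open Matrix

/-- The sum over all edges of `w_e · R^G(i,j)` equals `n - 1` for a connected
weighted graph on `n` vertices with Laplacian `L = Σ_e w_e b_e b_eᵀ`. -/
theorem stmt_8 {m n : ℕ} (hn : 0 < n) (u v : Fin m → Fin n) (w : Fin m → ℝ)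
    (hw : ∀ e, 0 < w e) (hne : ∀ e, u e ≠ v e)
    (L Lp : Matrix (Fin n) (Fin n) ℝ)
    (hL : L = ∑ e : Fin m, w e •
      Matrix.vecMulVec ((Pi.single (u e) 1 - Pi.single (v e) 1 : Fin n → ℝ))
        ((Pi.single (u e) 1 - Pi.single (v e) 1 : Fin n → ℝ)))
    (hconn : ∀ x : Fin n → ℝ, L.mulVec x = 0 ↔ ∃ c : ℝ, ∀ k, x k = c)
    (hLp : IsMoorePenrose L Lp) :
    ∑ e : Fin m, w e *
      ((Pi.single (u e) 1 - Pi.single (v e) 1 : Fin n → ℝ) ⬝ᵥ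
        Lp.mulVec (Pi.single (u e) 1 - Pi.single (v e) 1)) = (n : ℝ) - 1 := by
  classical
  obtain ⟨h1, h2, h3, h4⟩ := hLp
  set P : Matrix (Fin n) (Fin n) ℝ := Lp * L with hP
  -- Step 1: LHS = trace P
  have key : ∀ x : Fin n → ℝ, Matrix.trace (Lp * Matrix.vecMulVec x x) = x ⬝ᵥ Lp.mulVec x := by
    intro x
    simp only [Matrix.trace, Matrix.diag, Matrix.mul_apply, Matrix.vecMulVec_apply,
      dotProduct, Matrix.mulVec, Finset.mul_sum]
    apply Finset.sum_congr rfl; intro i _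
    apply Finset.sum_congr rfl; intro k _
    ring
  have hLHS : (∑ e : Fin m, w e *
      ((Pi.single (u e) 1 - Pi.single (v e) 1 : Fin n → ℝ) ⬝ᵥ
        Lp.mulVec (Pi.single (u e) 1 - Pi.single (v e) 1))) = Matrix.trace P := by
    rw [hP, hL, Finset.mul_sum, Matrix.trace_sum]
    apply Finset.sum_congr rfl; intro e _
    rw [Matrix.mul_smul, Matrix.trace_smul, key]
    simp [smul_eq_mul]
  rw [hLHS]
  -- Step 2: kernel facts
  have hL1 : L.mulVec (fun _ => (1:ℝ)) = 0 := (hconn _).mpr ⟨1, fun k => rfl⟩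
  have hker : ∀ x : Fin n → ℝ, ∃ c : ℝ, ∀ k, (x - P.mulVec x) k = c := by
    intro x
    apply (hconn _).mp
    have : L.mulVec (P.mulVec x) = L.mulVec x := by
      rw [hP, Matrix.mulVec_mulVec]
      rw [show L * (Lp * L) = L * Lp * L by rw [Matrix.mul_assoc], h1]
    rw [Matrix.mulVec_sub, this, sub_self]
  have hker' : ∀ j : Fin n, ∃ cc : ℝ, ∀ k,
      ((Pi.single j 1 : Fin n → ℝ) - P.mulVec (Pi.single j 1)) k = cc := fun j => hker _
  choose c hcspec using hker'
  have hPij : ∀ i j, P i j = (Pi.single j 1 : Fin n → ℝ) i - c j := by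
    intro i j
    have := hcspec j i
    simp only [Pi.sub_apply, Matrix.mulVec_single_one, Matrix.col_apply] at this
    linarith
  -- Step 3: row sum at row i0 gives Σ c = 1
  have hP1 : P.mulVec (fun _ => (1:ℝ)) = 0 := by
    rw [hP, ← Matrix.mulVec_mulVec, hL1, Matrix.mulVec_zero]
  obtain ⟨i0, _⟩ := Finset.univ_nonempty_iff.2 (Fin.pos_iff_nonempty.mp hn) |>.exists_mem
  have hrow : ∑ j, P i0 j = 0 := by
    have := congrFun hP1 i0
    simpa [Matrix.mulVec, dotProduct] using this
  have hsumc : ∑ j, c j = 1 := by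
    have h0 : ∑ j, ((Pi.single j 1 : Fin n → ℝ) i0 - c j) = 0 := by
      rw [← hrow]; exact Finset.sum_congr rfl fun j _ => (hPij i0 j).symm
    rw [Finset.sum_sub_distrib] at h0
    have hs : ∑ j, (Pi.single j 1 : Fin n → ℝ) i0 = 1 := by
      simp [Pi.single_apply, Finset.sum_ite_eq]
    linarith
  -- Step 4: trace
  have : Matrix.trace P = ∑ j, ((Pi.single j 1 : Fin n → ℝ) j - c j) := by
    unfold Matrix.trace
    exact Finset.sum_congr rfl fun j _ => hPij j j
  rw [this, Finset.sum_sub_distrib, hsumc]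
  simp [Pi.single_apply]
end
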